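/- The SE mechanism is restricted-faithful: for matroidal valuations P = (v_1,…,v_n), any agent i, any A ∈ cLD(P), any X ⊆ A_i, and any A'' ∈ cLD(P'') where P'' = (v_1,…,v_i|X,…,v_n), it holds that v_i(X) + p_i ≤ v_i(A''_i) + p''_i, where p and p'' are the SE subsidy vectors for A under P and for A'' under P'' respectively. -/

import Mathlib

open Finset

/-- A matroidal valuation on the goods `Fin m`: a monotone submodular function
with `v ∅ = 0` whose marginal gains lie in `{0,1}`. -/
structure Matroidal (m : ℕ) where
  v : Finset (Fin m) → ℕ
  v_empty : v ∅ = 0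
  mono : ∀ ⦃X Y : Finset (Fin m)⦄, X ⊆ Y → v X ≤ v Y
  submodular : ∀ X Y : Finset (Fin m), v (X ∪ Y) + v (X ∩ Y) ≤ v X + v Y
  marginal : ∀ (X : Finset (Fin m)) (e : Fin m), v (insert e X) ≤ v X + 1

/-- An allocation: the bundles are pairwise disjoint. -/
def IsAllocation {n m : ℕ} (A : Fin n → Finset (Fin m)) : Prop :=
  ∀ i j : Fin n, i ≠ j → Disjoint (A i) (A j)

/-- An allocation is clean (for matroidal valuations) iff each bundle is independent. -/
def Clean {n m : ℕ} (P : Fin n → Matroidal m) (A : Fin n → Finset (Fin m)) : Prop :=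
  ∀ i, (P i).v (A i) = (A i).card

/-- A utilitarian optimal allocation. -/
def UtilOpt {n m : ℕ} (P : Fin n → Matroidal m) (A : Fin n → Finset (Fin m)) : Prop :=
  IsAllocation A ∧ ∀ B : Fin n → Finset (Fin m), IsAllocation B →
    ∑ i, (P i).v (B i) ≤ ∑ i, (P i).v (A i)

/-- The sum of the `k` smallest entries of `u`, as the minimum of all `k`-subset sums. -/
noncomputable def kSmallestSum {n : ℕ} (u : Fin n → ℕ) (k : ℕ) : ℕ :=
  sInf {s | ∃ S : Finset (Fin n), S.card = k ∧ s = ∑ i ∈ S, u i}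

/-- `A` is Lorenz dominating: it is an allocation that Lorenz dominates every allocation. -/
def LorenzDominating {n m : ℕ} (P : Fin n → Matroidal m) (A : Fin n → Finset (Fin m)) : Prop :=
  IsAllocation A ∧ ∀ B : Fin n → Finset (Fin m), IsAllocation B →
    ∀ k ≤ n, kSmallestSum (fun i => (P i).v (B i)) k ≤ kSmallestSum (fun i => (P i).v (A i)) k

/-- The set of clean Lorenz dominating allocations. -/
def cLD {n m : ℕ} (P : Fin n → Matroidal m) : Set (Fin n → Finset (Fin m)) :=
  {A | Clean P A ∧ LorenzDominating P A}

/-- `min_{B ∈ cLD(P)} |B_i|`. -/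
noncomputable def minSize {n m : ℕ} (P : Fin n → Matroidal m) (i : Fin n) : ℕ :=
  sInf {c | ∃ A ∈ cLD P, c = (A i).card}

/-- `max_{B ∈ cLD(P)} |B_i|`. -/
noncomputable def maxSize {n m : ℕ} (P : Fin n → Matroidal m) (i : Fin n) : ℕ :=
  sSup {c | ∃ A ∈ cLD P, c = (A i).card}

/-- The SE subsidy for agent `i` under allocation `A` and profile `P`. -/
noncomputable def sePay {n m : ℕ} (P : Fin n → Matroidal m) (A : Fin n → Finset (Fin m))
    (i : Fin n) : ℕ :=
  if (A i).card = minSize P i ∧ (A i).card < Finset.univ.sup (fun j => (A j).card) then 1 else 0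

/-- Restriction of a matroidal valuation to a set `X`. -/
def Matroidal.restrict {m : ℕ} (w : Matroidal m) (X : Finset (Fin m)) : Matroidal m where
  v Y := w.v (X ∩ Y)
  v_empty := by simp [w.v_empty]
  mono := fun {Y Z} h => w.mono (Finset.inter_subset_inter le_rfl h)
  submodular := fun Y Z => by
    have h := w.submodular (X ∩ Y) (X ∩ Z)
    have h1 : X ∩ (Y ∪ Z) = (X ∩ Y) ∪ (X ∩ Z) := Finset.inter_union_distrib_left X Y Z
    have h2 : X ∩ (Y ∩ Z) = (X ∩ Y) ∩ (X ∩ Z) := by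
      ext a; simp [Finset.mem_inter]; tauto
    simpa [h1, h2] using h
  marginal := fun Y e => by
    by_cases he : e ∈ X
    · have h1 : X ∩ insert e Y = insert e (X ∩ Y) := by
        ext a
        simp only [Finset.mem_inter, Finset.mem_insert]
        constructor
        · rintro ⟨ha, h⟩
          rcases h with rfl | hb
          · exact Or.inl rfl
          · exact Or.inr ⟨ha, hb⟩
        · rintro (rfl | ⟨ha, hb⟩)
          · exact ⟨he, Or.inl rfl⟩
          · exact ⟨ha, Or.inr hb⟩
      simpa [h1] using w.marginal (X ∩ Y) e
    · have h1 : X ∩ insert e Y = X ∩ Y := by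
        ext a
        simp only [Finset.mem_inter, Finset.mem_insert]
        constructor
        · rintro ⟨ha, (rfl | hb)⟩
          · exact absurd ha he
          · exact ⟨ha, hb⟩
        · rintro ⟨ha, hb⟩; exact ⟨ha, Or.inr hb⟩
      simp only [h1]
      exact Nat.le_succ _


namespace SEaux


variable {m : ℕ}

/-- value is at most cardinality -/
lemma v_le_card (w : Matroidal m) (S : Finset (Fin m)) : w.v S ≤ S.card := by
  induction S using Finset.induction_on with
  | empty => simp [w.v_empty]
  | insert _ _ h ih =>
      rename_i a S
      calc w.v (insert a S) ≤ w.v S + 1 := w.marginal S a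
        _ ≤ S.card + 1 := by omega
        _ = (insert a S).card := by rw [Finset.card_insert_of_notMem h]

def Indep (w : Matroidal m) (S : Finset (Fin m)) : Prop := w.v S = S.card

lemma indep_subset (w : Matroidal m) {S T : Finset (Fin m)} (hT : T ⊆ S) (hS : Indep w S) :
    Indep w T := by
  have key : ∀ (U : Finset (Fin m)), w.v (T ∪ U) ≤ w.v T + U.card := by
    intro U
    induction U using Finset.induction_on with
    | empty => simp
    | insert _ _ h ih =>
        rename_i a U
        have h1 : T ∪ insert a U = insert a (T ∪ U) := by
          ext x; simp only [Finset.mem_insert, Finset.mem_union]; tauto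
        calc w.v (T ∪ insert a U) = w.v (insert a (T ∪ U)) := by rw [h1]
          _ ≤ w.v (T ∪ U) + 1 := w.marginal _ _
          _ ≤ w.v T + U.card + 1 := by omega
          _ = w.v T + (insert a U).card := by rw [Finset.card_insert_of_notMem h]; omega
  have h2 : T ∪ (S \ T) = S := Finset.union_sdiff_of_subset hT
  have h3 : (S \ T).card = S.card - T.card := Finset.card_sdiff_of_subset hT
  have h4 : T.card ≤ S.card := Finset.card_le_card hT
  have h5 := key (S \ T)
  rw [h2] at h5
  have h6 : w.v T ≤ T.card := v_le_card w T
  unfold Indep at *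
  omega

lemma indep_insert_card {w : Matroidal m} {S : Finset (Fin m)} {e : Fin m}
    (hS : Indep w S) (he : e ∉ S) (h : w.v (insert e S) = w.v S + 1) : Indep w (insert e S) := by
  unfold Indep at *
  rw [h, hS, Finset.card_insert_of_notMem he]

lemma indep_insert_iff {w : Matroidal m} {S : Finset (Fin m)} {e : Fin m}
    (hS : Indep w S) (he : e ∉ S) :
    Indep w (insert e S) ↔ w.v (insert e S) = w.v S + 1 := by
  unfold Indep at *
  rw [Finset.card_insert_of_notMem he, hS]

/-- if no single element of D helps C, then C ∪ D has the same value as C -/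
lemma v_union_eq_of_no_gain (w : Matroidal m) (C D : Finset (Fin m))
    (h : ∀ e ∈ D, w.v (insert e C) = w.v C) : w.v (C ∪ D) = w.v C := by
  induction D using Finset.induction_on with
  | empty => simp
  | insert _ _ hnot ih =>
      rename_i a D
      have hCD := ih (fun e he => h e (Finset.mem_insert_of_mem he))
      have ha := h a (Finset.mem_insert_self a D)
      -- submodular with (C ∪ D) and (insert a C)
      have hsub := w.submodular (C ∪ D) (insert a C)
      have h1 : (C ∪ D) ∪ insert a C = C ∪ insert a D := by
        ext x; simp [Finset.mem_union, Finset.mem_insert]; tauto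
      have h2 : C ⊆ (C ∪ D) ∩ insert a C := by
        intro x hx; simp [Finset.mem_inter, Finset.mem_union, Finset.mem_insert]; tauto
      have h3 : w.v C ≤ w.v ((C ∪ D) ∩ insert a C) := w.mono h2
      rw [h1] at hsub
      have h4 : w.v (C ∪ D) ≤ w.v (C ∪ insert a D) := w.mono (by
        intro x hx; simp [Finset.mem_union, Finset.mem_insert] at *; tauto)
      omega

/-- single matroid exchange -/
lemma single_exchange (w : Matroidal m) {C D : Finset (Fin m)}
    (hC : Indep w C) (hD : Indep w D) (h : C.card < D.card) :
    ∃ e ∈ D, e ∉ C ∧ Indep w (insert e C) := by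
  by_contra hcon
  push_neg at hcon
  have key : ∀ e ∈ D, w.v (insert e C) = w.v C := by
    intro e he
    by_cases heC : e ∈ C
    · rw [Finset.insert_eq_self.2 heC]
    · have h1 := hcon e he heC
      have h2 := w.marginal C e
      have h3 := w.mono (Finset.subset_insert e C)
      rw [indep_insert_iff hC heC] at h1
      omega
  have h1 := v_union_eq_of_no_gain w C D key
  have h2 : w.v D ≤ w.v (C ∪ D) := w.mono (Finset.subset_union_right)
  unfold Indep at hC hD
  omega


variable {n : ℕ}

lemma kS_le (u : Fin n → ℕ) {k : ℕ} {S : Finset (Fin n)} (hS : S.card = k) :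
    kSmallestSum u k ≤ ∑ i ∈ S, u i :=
  Nat.sInf_le ⟨S, hS, rfl⟩

lemma kS_exists (u : Fin n → ℕ) {k : ℕ} (hk : k ≤ n) :
    ∃ S : Finset (Fin n), S.card = k ∧ kSmallestSum u k = ∑ i ∈ S, u i := by
  have hne : {s | ∃ S : Finset (Fin n), S.card = k ∧ s = ∑ i ∈ S, u i}.Nonempty := by
    obtain ⟨S, -, hS⟩ := Finset.exists_subset_card_eq (by simpa using hk :
      k ≤ (Finset.univ : Finset (Fin n)).card)
    exact ⟨∑ i ∈ S, u i, S, hS, rfl⟩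
  obtain ⟨S, hS, h⟩ := Nat.sInf_mem hne
  exact ⟨S, hS, h⟩

lemma kS_top (u : Fin n → ℕ) : kSmallestSum u n = ∑ i, u i := by
  apply le_antisymm
  · exact kS_le u (by simp)
  · obtain ⟨S, hS, h⟩ := kS_exists u (le_refl n)
    have : S = Finset.univ := Finset.eq_univ_of_card S (by simpa using hS)
    rw [h, this]

/-- sum of n-1 smallest = total - max -/
lemma kS_pred (u : Fin n → ℕ) (hn : 0 < n) :
    kSmallestSum u (n - 1) + Finset.univ.sup u = ∑ i, u i := by
  have hmax : ∃ j : Fin n, Finset.univ.sup u = u j := by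
    obtain ⟨j, -, hj⟩ := Finset.exists_mem_eq_sup Finset.univ
      (Finset.univ_nonempty_iff.2 (Fin.pos_iff_nonempty.1 hn)) u
    exact ⟨j, hj⟩
  obtain ⟨j, hj⟩ := hmax
  apply le_antisymm
  · have h1 : kSmallestSum u (n-1) ≤ ∑ i ∈ Finset.univ.erase j, u i := by
      apply kS_le; simp [Finset.card_erase_of_mem]
    have h2 : ∑ i ∈ Finset.univ.erase j, u i + u j = ∑ i, u i :=
      Finset.sum_erase_add _ _ (Finset.mem_univ j)
    omega
  · obtain ⟨S, hS, h⟩ := kS_exists u (Nat.sub_le n 1)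
    obtain ⟨l, hl⟩ : ∃ l, l ∉ S := by
      by_contra hc; push_neg at hc
      have : S = Finset.univ := Finset.eq_univ_iff_forall.2 hc
      rw [this] at hS; simp at hS; omega
    have h3 : ∑ i ∈ insert l S, u i = u l + ∑ i ∈ S, u i := Finset.sum_insert hl
    have h6 : (insert l S).card = n := by
      rw [Finset.card_insert_of_notMem hl]; omega
    have h7 : insert l S = Finset.univ := Finset.eq_univ_of_card _ (by simpa using h6)
    have h4 : u l ≤ Finset.univ.sup u := Finset.le_sup (Finset.mem_univ l)
    rw [h7] at h3
    omega

lemma sum_shift {x y : Fin n → ℕ} {a b : Fin n} (hab : a ≠ b)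
    (hya : y a = x a + 1) (hxb : x b = y b + 1)
    (hoth : ∀ j, j ≠ a → j ≠ b → y j = x j) (S : Finset (Fin n)) :
    ∑ i ∈ S, y i + (if b ∈ S then 1 else 0) = ∑ i ∈ S, x i + (if a ∈ S then 1 else 0) := by
  have h1 : ∑ i ∈ S, y i + (if b ∈ S then 1 else 0)
      = ∑ i ∈ S, (y i + if i = b then 1 else 0) := by
    rw [Finset.sum_add_distrib, Finset.sum_ite_eq' S b (fun _ => 1)]
  have h2 : ∑ i ∈ S, x i + (if a ∈ S then 1 else 0)
      = ∑ i ∈ S, (x i + if i = a then 1 else 0) := by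
    rw [Finset.sum_add_distrib, Finset.sum_ite_eq' S a (fun _ => 1)]
  rw [h1, h2]
  apply Finset.sum_congr rfl
  intro j hj
  by_cases hja : j = a
  · subst hja; simp [hab, hya]
  · by_cases hjb : j = b
    · have hba : ¬ (b = a) := fun h => hab h.symm
      simp [hjb, hba]
      omega
    · simp [hja, hjb, hoth j hja hjb]

lemma sum_swap_elem (x : Fin n → ℕ) {S : Finset (Fin n)} {α β : Fin n}
    (hα : α ∈ S) (hβ : β ∉ S) :
    ∑ i ∈ S, x i + x β = ∑ i ∈ insert β (S.erase α), x i + x α := by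
  have h1 : ∑ i ∈ insert β (S.erase α), x i = x β + ∑ i ∈ S.erase α, x i :=
    Finset.sum_insert (fun h => hβ (Finset.mem_of_mem_erase h))
  have h2 : ∑ i ∈ S.erase α, x i + x α = ∑ i ∈ S, x i :=
    Finset.sum_erase_add _ _ hα
  omega

lemma card_insert_erase {S : Finset (Fin n)} {α β : Fin n}
    (hα : α ∈ S) (hβ : β ∉ S) : (insert β (S.erase α)).card = S.card := by
  rw [Finset.card_insert_of_notMem (fun h => hβ (Finset.mem_of_mem_erase h)),
    Finset.card_erase_of_mem hα]
  have : 0 < S.card := Finset.card_pos.2 ⟨α, hα⟩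
  omega

/-- moving one unit from a rich coordinate b to a poor coordinate a (gap ≥ 2)
strictly improves some prefix sum. -/
lemma transfer_improves {x y : Fin n → ℕ} {a b : Fin n} (hab : a ≠ b)
    (hya : y a = x a + 1) (hxb : x b = y b + 1)
    (hoth : ∀ j, j ≠ a → j ≠ b → y j = x j) (hgap : x a + 2 ≤ x b) :
    ∃ k ≤ n, kSmallestSum x k < kSmallestSum y k := by
  classical
  set T : Finset (Fin n) := Finset.univ.filter (fun j => x j ≤ x a) with hT
  have haT : a ∈ T := by simp [hT]
  have hbT : b ∉ T := by simp [hT]; omega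
  set k := T.card with hk
  have hkn : k ≤ n := by
    have := Finset.card_le_card (Finset.subset_univ T); simpa using this
  refine ⟨k, hkn, ?_⟩
  have key : ∀ S : Finset (Fin n), S.card = k → kSmallestSum x k + 1 ≤ ∑ i ∈ S, y i := by
    intro S hS
    have hshift := sum_shift hab hya hxb hoth S
    by_cases hbS : b ∈ S
    · -- S contains b; S ≠ T, find j ∈ T \ S
      obtain ⟨j, hjT, hjS⟩ : ∃ j, j ∈ T ∧ j ∉ S := by
        by_contra hc; push_neg at hc
        have hsub : T ⊆ S := hc
        have : T = S := Finset.eq_of_subset_of_card_le hsub (by omega)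
        rw [← this] at hbS; exact hbT hbS
      have hswap := sum_swap_elem x (hbS) hjS
      have hcard := card_insert_erase (S := S) hbS hjS
      have hle : kSmallestSum x k ≤ ∑ i ∈ insert j (S.erase b), x i :=
        kS_le x (by rw [hcard, hS])
      have hxj : x j ≤ x a := by simp [hT] at hjT; exact hjT
      simp only [hbS, if_pos] at hshift
      by_cases haS : a ∈ S
      · simp only [haS, if_pos] at hshift; omega
      · simp only [haS, if_neg, not_false_iff] at hshift; omega
    · by_cases haS : a ∈ S
      · have hle : kSmallestSum x k ≤ ∑ i ∈ S, x i := kS_le x hS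
        simp only [hbS, haS, if_pos, if_neg, not_false_iff] at hshift
        omega
      · -- neither a nor b in S; find j' ∈ S \ T
        obtain ⟨j', hj'S, hj'T⟩ : ∃ j', j' ∈ S ∧ j' ∉ T := by
          by_contra hc; push_neg at hc
          have hsub : S ⊆ T := hc
          have : S = T := Finset.eq_of_subset_of_card_le hsub (by omega)
          rw [this] at haS; exact haS haT
        have hswap := sum_swap_elem x hj'S haS
        have hcard := card_insert_erase (S := S) hj'S haS
        have hle : kSmallestSum x k ≤ ∑ i ∈ insert a (S.erase j'), x i :=
          kS_le x (by rw [hcard, hS])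
        have hxj : x a < x j' := by simp [hT] at hj'T; omega
        simp only [hbS, haS, if_neg, not_false_iff] at hshift
        omega
  obtain ⟨S₀, hS₀, hS₀eq⟩ := kS_exists y hkn
  have := key S₀ hS₀
  omega

/-- kSmallestSum is invariant under swapping two coordinates' values. -/
lemma kS_swap {x y : Fin n → ℕ} {a b : Fin n}
    (hya : y a = x b) (hyb : y b = x a)
    (hoth : ∀ j, j ≠ a → j ≠ b → y j = x j) {k : ℕ} (hk : k ≤ n) :
    kSmallestSum y k = kSmallestSum x k := by
  classical
  have hcomp : ∀ j, y j = x (Equiv.swap a b j) := by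
    intro j
    by_cases hja : j = a
    · subst hja; rw [Equiv.swap_apply_left]; exact hya
    · by_cases hjb : j = b
      · subst hjb; rw [Equiv.swap_apply_right]; exact hyb
      · rw [Equiv.swap_apply_of_ne_of_ne hja hjb]; exact hoth j hja hjb
  have half : ∀ (u v : Fin n → ℕ), (∀ j, u j = v (Equiv.swap a b j)) →
      kSmallestSum v k ≤ kSmallestSum u k := by
    intro u v huv
    obtain ⟨S, hS, hSeq⟩ := kS_exists u hk
    have himg : ∑ i ∈ S, u i = ∑ i ∈ S.image (Equiv.swap a b), v i := by
      rw [Finset.sum_image (by intro p _ q _ h; exact (Equiv.swap a b).injective h)]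
      exact Finset.sum_congr rfl (fun j _ => huv j)
    have hcard : (S.image (Equiv.swap a b)).card = k := by
      rw [Finset.card_image_of_injective _ (Equiv.swap a b).injective]; exact hS
    rw [hSeq, himg]
    exact kS_le v hcard
  have hcomp' : ∀ j, x j = y (Equiv.swap a b j) := by
    intro j
    have := hcomp (Equiv.swap a b j)
    rw [Equiv.swap_apply_self] at this
    exact this.symm
  exact le_antisymm (half x y hcomp') (half y x hcomp)

end SEaux

namespace SEaux
open Finset
variable {n m : ℕ}

lemma clean_indep {Q : Fin n → Matroidal m} {C : Fin n → Finset (Fin m)}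
    (hC : Clean Q C) (j : Fin n) : Indep (Q j) (C j) := hC j

lemma kS_vec_eq {Q : Fin n → Matroidal m} {C : Fin n → Finset (Fin m)}
    (hC : Clean Q C) (k : ℕ) :
    kSmallestSum (fun j => (Q j).v (C j)) k = kSmallestSum (fun j => (C j).card) k := by
  congr 1; funext j; exact hC j

lemma LD_dom {Q : Fin n → Matroidal m} {D : Fin n → Finset (Fin m)} (hD : D ∈ cLD Q)
    {C : Fin n → Finset (Fin m)} (hCa : IsAllocation C) (hCc : Clean Q C)
    {k : ℕ} (hk : k ≤ n) :
    kSmallestSum (fun j => (C j).card) k ≤ kSmallestSum (fun j => (D j).card) k := by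
  have h := hD.2.2 C hCa k hk
  rwa [kS_vec_eq hCc, kS_vec_eq hD.1] at h

lemma LD_welfare {Q : Fin n → Matroidal m} {D : Fin n → Finset (Fin m)} (hD : D ∈ cLD Q)
    {C : Fin n → Finset (Fin m)} (hCa : IsAllocation C) (hCc : Clean Q C) :
    ∑ j, (C j).card ≤ ∑ j, (D j).card := by
  have h := LD_dom hD hCa hCc (le_refl n)
  rwa [kS_top, kS_top] at h

lemma LD_no_transfer {Q : Fin n → Matroidal m} {D : Fin n → Finset (Fin m)} (hD : D ∈ cLD Q)
    {C : Fin n → Finset (Fin m)} (hCa : IsAllocation C) (hCc : Clean Q C)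
    {a b : Fin n} (hab : a ≠ b)
    (h1 : (C a).card = (D a).card + 1) (h2 : (D b).card = (C b).card + 1)
    (h3 : ∀ j, j ≠ a → j ≠ b → (C j).card = (D j).card) :
    (D b).card ≤ (D a).card + 1 := by
  by_contra hcon
  push_neg at hcon
  have hgap : (D a).card + 2 ≤ (D b).card := by omega
  obtain ⟨k, hk, hlt⟩ := transfer_improves (x := fun j => (D j).card)
    (y := fun j => (C j).card) hab h1 h2 h3 hgap
  have := LD_dom hD hCa hCc hk
  omega

lemma LD_swap {Q : Fin n → Matroidal m} {D : Fin n → Finset (Fin m)} (hD : D ∈ cLD Q)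
    {C : Fin n → Finset (Fin m)} (hCa : IsAllocation C) (hCc : Clean Q C)
    {a b : Fin n}
    (ha : (C a).card = (D b).card) (hb : (C b).card = (D a).card)
    (hoth : ∀ j, j ≠ a → j ≠ b → (C j).card = (D j).card) : C ∈ cLD Q := by
  refine ⟨hCc, hCa, fun B hB k hk => ?_⟩
  have h := hD.2.2 B hB k hk
  rw [kS_vec_eq hCc]
  rw [kS_vec_eq hD.1] at h
  have heq : kSmallestSum (fun j => (C j).card) k = kSmallestSum (fun j => (D j).card) k :=
    kS_swap ha hb hoth hk
  omega

/-- add an unallocated element -/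
def addE (C : Fin n → Finset (Fin m)) (α : Fin n) (e : Fin m) : Fin n → Finset (Fin m) :=
  Function.update C α (insert e (C α))

/-- move an element from β to α -/
def moveE (C : Fin n → Finset (Fin m)) (α β : Fin n) (e : Fin m) : Fin n → Finset (Fin m) :=
  Function.update (Function.update C β ((C β).erase e)) α (insert e (C α))

lemma addE_self (C : Fin n → Finset (Fin m)) (α : Fin n) (e : Fin m) :
    addE C α e α = insert e (C α) := by simp [addE]

lemma addE_other (C : Fin n → Finset (Fin m)) {α j : Fin n} (e : Fin m) (h : j ≠ α) :
    addE C α e j = C j := by simp [addE, Function.update_of_ne h]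

lemma moveE_fst (C : Fin n → Finset (Fin m)) (α β : Fin n) (e : Fin m) :
    moveE C α β e α = insert e (C α) := by simp [moveE]

lemma moveE_snd (C : Fin n → Finset (Fin m)) {α β : Fin n} (e : Fin m) (h : β ≠ α) :
    moveE C α β e β = (C β).erase e := by simp [moveE, Function.update_of_ne h]

lemma moveE_other (C : Fin n → Finset (Fin m)) {α β j : Fin n} (e : Fin m)
    (h1 : j ≠ α) (h2 : j ≠ β) : moveE C α β e j = C j := by
  simp [moveE, Function.update_of_ne h1, Function.update_of_ne h2]

lemma isalloc_addE {C : Fin n → Finset (Fin m)} (hC : IsAllocation C) {α : Fin n} {e : Fin m}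
    (he : ∀ j, e ∉ C j) : IsAllocation (addE C α e) := by
  intro p q hpq
  rw [Finset.disjoint_left]
  intro x hxp hxq
  by_cases hpα : p = α
  · subst hpα
    rw [addE_self] at hxp
    rw [addE_other C e (Ne.symm hpq)] at hxq
    rcases Finset.mem_insert.1 hxp with rfl | hxp'
    · exact he q hxq
    · exact (Finset.disjoint_left.1 (hC p q hpq)) hxp' hxq
  · rw [addE_other C e hpα] at hxp
    by_cases hqα : q = α
    · subst hqα
      rw [addE_self] at hxq
      rcases Finset.mem_insert.1 hxq with rfl | hxq'
      · exact he p hxp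
      · exact (Finset.disjoint_left.1 (hC p q hpq)) hxp hxq'
    · rw [addE_other C e hqα] at hxq
      exact (Finset.disjoint_left.1 (hC p q hpq)) hxp hxq

lemma clean_addE {Q : Fin n → Matroidal m} {C : Fin n → Finset (Fin m)} (hC : Clean Q C)
    {α : Fin n} {e : Fin m} (hind : Indep (Q α) (insert e (C α))) :
    Clean Q (addE C α e) := by
  intro j
  by_cases hjα : j = α
  · subst hjα; rw [addE_self]; exact hind
  · rw [addE_other C e hjα]; exact hC j

lemma isalloc_moveE {C : Fin n → Finset (Fin m)} (hC : IsAllocation C) {α β : Fin n}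
    {e : Fin m} (heβ : e ∈ C β) (hαβ : β ≠ α) : IsAllocation (moveE C α β e) := by
  intro p q hpq
  rw [Finset.disjoint_left]
  intro x hxp hxq
  have key : ∀ r, r ≠ α → x ∈ moveE C α β e r → x ∈ C r ∧ x ≠ e ∨ x ∈ C r := by
    intro r hr hx
    by_cases hrβ : r = β
    · subst hrβ
      rw [moveE_snd C e hαβ] at hx
      exact Or.inl ⟨Finset.mem_of_mem_erase hx, Finset.ne_of_mem_erase hx⟩
    · rw [moveE_other C e hr hrβ] at hx
      exact Or.inr hx
  by_cases hpα : p = α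
  · subst hpα
    rw [moveE_fst] at hxp
    have hq := key q (Ne.symm hpq) hxq
    rcases Finset.mem_insert.1 hxp with rfl | hxp'
    · rcases hq with ⟨_, hne⟩ | hxq'
      · exact hne rfl
      · -- x = e ∈ C q and e ∈ C β : q ≠ β since if q = β, key gave Or.inl... 
        by_cases hqβ : q = β
        · subst hqβ
          rw [moveE_snd C _ hαβ] at hxq
          exact (Finset.ne_of_mem_erase hxq) rfl
        · exact (Finset.disjoint_left.1 (hC β q (fun h => hqβ h.symm))) heβ hxq'
    · rcases hq with ⟨hxq', _⟩ | hxq'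
      · exact (Finset.disjoint_left.1 (hC p q hpq)) hxp' hxq'
      · exact (Finset.disjoint_left.1 (hC p q hpq)) hxp' hxq'
  · have hp := key p hpα hxp
    by_cases hqα : q = α
    · subst hqα
      rw [moveE_fst] at hxq
      rcases Finset.mem_insert.1 hxq with rfl | hxq'
      · rcases hp with ⟨_, hne⟩ | hxp'
        · exact hne rfl
        · by_cases hpβ : p = β
          · subst hpβ
            rw [moveE_snd C _ hαβ] at hxp
            exact (Finset.ne_of_mem_erase hxp) rfl
          · exact (Finset.disjoint_left.1 (hC β p (fun h => hpβ h.symm))) heβ hxp'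
      · rcases hp with ⟨hxp', _⟩ | hxp'
        · exact (Finset.disjoint_left.1 (hC p q hpq)) hxp' hxq'
        · exact (Finset.disjoint_left.1 (hC p q hpq)) hxp' hxq'
    · rcases hp with ⟨hxp', _⟩ | hxp' <;>
      · rcases key q hqα hxq with ⟨hxq', _⟩ | hxq' <;>
          exact (Finset.disjoint_left.1 (hC p q hpq)) hxp' hxq'

lemma clean_moveE {Q : Fin n → Matroidal m} {C : Fin n → Finset (Fin m)} (hC : Clean Q C)
    {α β : Fin n} {e : Fin m} (hαβ : β ≠ α)
    (hind : Indep (Q α) (insert e (C α))) : Clean Q (moveE C α β e) := by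
  intro j
  by_cases hjα : j = α
  · subst hjα; rw [moveE_fst]; exact hind
  · by_cases hjβ : j = β
    · subst hjβ; rw [moveE_snd C e hαβ]
      exact indep_subset (Q j) (Finset.erase_subset e (C j)) (hC j)
    · rw [moveE_other C e hjα hjβ]; exact hC j

end SEaux

namespace SEaux
open Finset
variable {n m : ℕ}

lemma card_addE {C : Fin n → Finset (Fin m)} {α : Fin n} {e : Fin m} (he : e ∉ C α) :
    ((addE C α e) α).card = (C α).card + 1 := by
  rw [addE_self, Finset.card_insert_of_notMem he]

/-- the exchange lemma for clean allocations (augmenting chains). -/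
lemma EX_aux {Q : Fin n → Matroidal m} {D : Fin n → Finset (Fin m)}
    (hDa : IsAllocation D) (hDc : Clean Q D) (N : ℕ) :
    ∀ (C : Fin n → Finset (Fin m)) (α : Fin n),
      IsAllocation C → Clean Q C → (C α).card < (D α).card →
      (∑ j, ((D j) \ (C j)).card ≤ N) →
    ∃ C', IsAllocation C' ∧ Clean Q C' ∧
      (∀ j x, x ∈ C' j → x ∈ C j ∨ x ∈ D j) ∧
      (∀ j x, x ∈ C j → x ∉ C' j → x ∉ D j) ∧
      (∃ x, x ∈ D α ∧ x ∉ C α ∧ x ∈ C' α) ∧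
      (C' α).card = (C α).card + 1 ∧
      ( ((∀ j, j ≠ α → (C' j).card = (C j).card) ∧ (∀ j, D j ⊆ C j → C' j = C j))
        ∨ ∃ β, β ≠ α ∧ (D β).card < (C β).card ∧ (C β).card = (C' β).card + 1 ∧
            (∀ j, j ≠ α → j ≠ β → (C' j).card = (C j).card) ∧
            (∀ j, j ≠ β → D j ⊆ C j → C' j = C j) ) := by
  induction N with
  | zero =>
      intro C α hCa hCc hlt hsum
      exfalso
      obtain ⟨e, heD, heC, -⟩ := single_exchange (Q α) (hCc α) (hDc α) hlt
      have h1 : 0 < ((D α) \ (C α)).card :=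
        Finset.card_pos.2 ⟨e, Finset.mem_sdiff.2 ⟨heD, heC⟩⟩
      have h2 : ((D α) \ (C α)).card ≤ ∑ j, ((D j) \ (C j)).card :=
        Finset.single_le_sum (f := fun j => ((D j) \ (C j)).card)
          (fun j _ => Nat.zero_le _) (Finset.mem_univ α)
      omega
  | succ N ih =>
      intro C α hCa hCc hlt hsum
      obtain ⟨e, heD, heC, hind⟩ := single_exchange (Q α) (hCc α) (hDc α) hlt
      by_cases hfree : ∀ j, e ∉ C j
      · -- add
        refine ⟨addE C α e, isalloc_addE hCa hfree, clean_addE hCc hind, ?_, ?_, ?_, ?_, ?_⟩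
        · intro j x hx
          by_cases hj : j = α
          · subst hj; rw [addE_self] at hx
            rcases Finset.mem_insert.1 hx with rfl | hx'
            · exact Or.inr heD
            · exact Or.inl hx'
          · rw [addE_other C e hj] at hx; exact Or.inl hx
        · intro j x hx hx'
          exfalso
          by_cases hj : j = α
          · subst hj; rw [addE_self] at hx'
            exact hx' (Finset.mem_insert_of_mem hx)
          · rw [addE_other C e hj] at hx'; exact hx' hx
        · exact ⟨e, heD, heC, by rw [addE_self]; exact Finset.mem_insert_self e _⟩
        · exact card_addE heC
        · left
          constructor
          · intro j hj; rw [addE_other C e hj]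
          · intro j hDC
            by_cases hj : j = α
            · subst hj; exact absurd (hDC heD) heC
            · rw [addE_other C e hj]
      · push_neg at hfree
        obtain ⟨δ, heδ⟩ := hfree
        have hδα : δ ≠ α := fun h => heC (h ▸ heδ)
        have heDδ : e ∉ D δ := by
          intro hc
          exact (Finset.disjoint_left.1 (hDa α δ (Ne.symm hδα))) heD hc
        set Cmid := moveE C α δ e with hCm
        have hCma : IsAllocation Cmid := isalloc_moveE hCa heδ hδα
        have hCmc : Clean Q Cmid := clean_moveE hCc hδα hind
        have hCmα : Cmid α = insert e (C α) := moveE_fst C α δ e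
        have hCmδ : Cmid δ = (C δ).erase e := moveE_snd C e hδα
        have hCmoth : ∀ j, j ≠ α → j ≠ δ → Cmid j = C j := fun j h1 h2 => moveE_other C e h1 h2
        have hcard_α : (Cmid α).card = (C α).card + 1 := by
          rw [hCmα, Finset.card_insert_of_notMem heC]
        have hcard_δ : (C δ).card = (Cmid δ).card + 1 := by
          rw [hCmδ, Finset.card_erase_of_mem heδ]
          have : 0 < (C δ).card := Finset.card_pos.2 ⟨e, heδ⟩
          omega
        by_cases hswap : (D δ).card < (C δ).card
        · -- stop here
          refine ⟨Cmid, hCma, hCmc, ?_, ?_, ?_, hcard_α, ?_⟩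
          · intro j x hx
            by_cases hj : j = α
            · subst hj; rw [hCmα] at hx
              rcases Finset.mem_insert.1 hx with rfl | hx'
              · exact Or.inr heD
              · exact Or.inl hx'
            · by_cases hj2 : j = δ
              · subst hj2; rw [hCmδ] at hx
                exact Or.inl (Finset.mem_of_mem_erase hx)
              · rw [hCmoth j hj hj2] at hx; exact Or.inl hx
          · intro j x hx hx'
            by_cases hj : j = α
            · subst hj; rw [hCmα] at hx'
              exact absurd (Finset.mem_insert_of_mem hx) hx'
            · by_cases hj2 : j = δ
              · subst hj2
                rw [hCmδ] at hx'
                have hxe : x = e := by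
                  by_contra hxe
                  exact hx' (Finset.mem_erase.2 ⟨hxe, hx⟩)
                subst hxe; exact heDδ
              · rw [hCmoth j hj hj2] at hx'; exact absurd hx hx'
          · exact ⟨e, heD, heC, by rw [hCmα]; exact Finset.mem_insert_self e _⟩
          · right
            refine ⟨δ, hδα, hswap, hcard_δ, ?_, ?_⟩
            · intro j hjα hjδ; rw [hCmoth j hjα hjδ]
            · intro j hjδ hDC
              by_cases hj : j = α
              · subst hj; exact absurd (hDC heD) heC
              · rw [hCmoth j hj hjδ]
        · -- recurse
          push_neg at hswap
          have hlt' : (Cmid δ).card < (D δ).card := by omega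
          have hsum' : ∑ j, ((D j) \ (Cmid j)).card ≤ N := by
            have hα : ((D α) \ (Cmid α)).card + 1 = ((D α) \ (C α)).card := by
              have hset : (D α) \ (Cmid α) = ((D α) \ (C α)).erase e := by
                rw [hCmα]; ext x
                simp only [Finset.mem_sdiff, Finset.mem_insert, Finset.mem_erase]
                tauto
              rw [hset, Finset.card_erase_of_mem (Finset.mem_sdiff.2 ⟨heD, heC⟩)]
              have : 0 < ((D α) \ (C α)).card :=
                Finset.card_pos.2 ⟨e, Finset.mem_sdiff.2 ⟨heD, heC⟩⟩
              omega
            have hδ : (D δ) \ (Cmid δ) = (D δ) \ (C δ) := by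
              rw [hCmδ]; ext x
              simp only [Finset.mem_sdiff, Finset.mem_erase]
              constructor
              · rintro ⟨h1, h2⟩
                refine ⟨h1, fun hc => h2 ⟨fun hxe => heDδ (hxe ▸ h1), hc⟩⟩
              · rintro ⟨h1, h2⟩
                exact ⟨h1, fun hc => h2 hc.2⟩
            have hsplit : ∀ (E : Fin n → Finset (Fin m)),
                ∑ j, ((D j) \ (E j)).card
                  = ∑ j ∈ Finset.univ.erase α, ((D j) \ (E j)).card + ((D α) \ (E α)).card :=
              fun E => (Finset.sum_erase_add _ _ (Finset.mem_univ α)).symm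
            have hcongr : ∑ j ∈ Finset.univ.erase α, ((D j) \ (Cmid j)).card
                = ∑ j ∈ Finset.univ.erase α, ((D j) \ (C j)).card := by
              apply Finset.sum_congr rfl
              intro j hj
              have hjα : j ≠ α := (Finset.mem_erase.1 hj).1
              by_cases hjδ : j = δ
              · subst hjδ; rw [hδ]
              · rw [hCmoth j hjα hjδ]
            rw [hsplit Cmid, hsplit C] at *
            omega
          obtain ⟨C'', hC''a, hC''c, haddok, hremok, hstrict, hcardδ, hbranch⟩ :=
            ih Cmid δ hCma hCmc hlt' hsum'
          have hDCδfalse : ¬ (D δ ⊆ C δ) := by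
            intro hsub
            have h1 : (D δ).card ≤ (C δ).card := Finset.card_le_card hsub
            have h2 : D δ = C δ := Finset.eq_of_subset_of_card_le hsub (by omega)
            rw [← h2] at heδ
            exact heDδ heδ
          have hC''mem : ∀ j x, x ∈ C'' j → x ∈ C j ∨ x ∈ D j := by
            intro j x hx
            rcases haddok j x hx with hx' | hx'
            · by_cases hj : j = α
              · subst hj; rw [hCmα] at hx'
                rcases Finset.mem_insert.1 hx' with rfl | hx''
                · exact Or.inr heD
                · exact Or.inl hx''
              · by_cases hj2 : j = δ
                · subst hj2; rw [hCmδ] at hx'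
                  exact Or.inl (Finset.mem_of_mem_erase hx')
                · rw [hCmoth j hj hj2] at hx'; exact Or.inl hx'
            · exact Or.inr hx'
          have hremok' : ∀ j x, x ∈ C j → x ∉ C'' j → x ∉ D j := by
            intro j x hxC hxC''
            by_cases hxCmid : x ∈ Cmid j
            · exact hremok j x hxCmid hxC''
            · by_cases hj : j = α
              · subst hj; rw [hCmα] at hxCmid
                exact absurd (Finset.mem_insert_of_mem hxC) hxCmid
              · by_cases hj2 : j = δ
                · subst hj2; rw [hCmδ] at hxCmid
                  have hxe : x = e := by
                    by_contra hxe
                    exact hxCmid (Finset.mem_erase.2 ⟨hxe, hxC⟩)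
                  subst hxe; exact heDδ
                · rw [hCmoth j hj hj2] at hxCmid; exact absurd hxC hxCmid
          have hstrict' : e ∈ C'' α := by
            by_contra hc
            have heCmidα : e ∈ Cmid α := by rw [hCmα]; exact Finset.mem_insert_self e _
            exact (hremok α e heCmidα hc) heD
          have hβne : ∀ β'', (D β'').card < (Cmid β'').card → β'' ≠ α := by
            intro β'' hβlt hc
            subst hc
            rw [hcard_α] at hβlt
            omega
          have hcardα' : (C'' α).card = (C α).card + 1 := by
            rcases hbranch with ⟨hcards, -⟩ | ⟨β'', hβδ, hβlt, -, hcards, -⟩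
            · rw [hcards α hδα.symm, hcard_α]
            · rw [hcards α hδα.symm (Ne.symm (hβne β'' hβlt)), hcard_α]
          refine ⟨C'', hC''a, hC''c, hC''mem, hremok', ⟨e, heD, heC, hstrict'⟩, hcardα', ?_⟩
          rcases hbranch with ⟨hcards, hnogain⟩ | ⟨β'', hβδ, hβlt, hcardβ, hcards, hnogain⟩
          · -- recursion was ADD: net effect on C is ADD at α
            left
            constructor
            · intro j hjα
              by_cases hjδ : j = δ
              · subst hjδ; omega
              · rw [hcards j hjδ, hCmoth j hjα hjδ]
            · intro j hDC
              by_cases hjα : j = α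
              · subst hjα; exact absurd (hDC heD) heC
              · by_cases hjδ : j = δ
                · subst hjδ; exact absurd hDC hDCδfalse
                · rw [hnogain j (by rw [hCmoth j hjα hjδ]; exact hDC), hCmoth j hjα hjδ]
          · -- recursion was SWAP at β''
            right
            have hβ''α : β'' ≠ α := hβne β'' hβlt
            have hCmβ'' : Cmid β'' = C β'' := hCmoth β'' hβ''α hβδ
            refine ⟨β'', hβ''α, by rw [← hCmβ'']; exact hβlt, by rw [← hCmβ'']; exact hcardβ,
              ?_, ?_⟩
            · intro j hjα hjβ
              by_cases hjδ : j = δ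
              · subst hjδ; omega
              · rw [hcards j hjδ hjβ, hCmoth j hjα hjδ]
            · intro j hjβ hDC
              by_cases hjα : j = α
              · subst hjα; exact absurd (hDC heD) heC
              · by_cases hjδ : j = δ
                · subst hjδ; exact absurd hDC hDCδfalse
                · rw [hnogain j hjβ (by rw [hCmoth j hjα hjδ]; exact hDC), hCmoth j hjα hjδ]

end SEaux

namespace SEaux
open Finset
variable {n m : ℕ}

lemma EX {Q : Fin n → Matroidal m} {C D : Fin n → Finset (Fin m)}
    (hCa : IsAllocation C) (hCc : Clean Q C) (hDa : IsAllocation D) (hDc : Clean Q D)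
    (α : Fin n) (hlt : (C α).card < (D α).card) :
    ∃ C', IsAllocation C' ∧ Clean Q C' ∧
      (∀ j x, x ∈ C' j → x ∈ C j ∨ x ∈ D j) ∧
      (∀ j x, x ∈ C j → x ∉ C' j → x ∉ D j) ∧
      (∃ x, x ∈ D α ∧ x ∉ C α ∧ x ∈ C' α) ∧
      (C' α).card = (C α).card + 1 ∧
      ( ((∀ j, j ≠ α → (C' j).card = (C j).card) ∧ (∀ j, D j ⊆ C j → C' j = C j))
        ∨ ∃ β, β ≠ α ∧ (D β).card < (C β).card ∧ (C β).card = (C' β).card + 1 ∧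
            (∀ j, j ≠ α → j ≠ β → (C' j).card = (C j).card) ∧
            (∀ j, j ≠ β → D j ⊆ C j → C' j = C j) ) :=
  EX_aux hDa hDc (∑ j, ((D j) \ (C j)).card) C α hCa hCc hlt (le_refl _)

def sdc (A B : Finset (Fin m)) : ℕ := ((A \ B) ∪ (B \ A)).card

lemma mu_lt {C C' D : Fin n → Finset (Fin m)}
    (haddok : ∀ j x, x ∈ C' j → x ∈ C j ∨ x ∈ D j)
    (hremok : ∀ j x, x ∈ C j → x ∉ C' j → x ∉ D j)
    {α : Fin n} (hstrict : ∃ x, x ∈ D α ∧ x ∉ C α ∧ x ∈ C' α) :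
    ∑ j, sdc (C' j) (D j) < ∑ j, sdc (C j) (D j) := by
  obtain ⟨e, heD, heC, heC'⟩ := hstrict
  have hsub : ∀ j, ((C' j \ D j) ∪ (D j \ C' j)) ⊆ ((C j \ D j) ∪ (D j \ C j)) := by
    intro j x hx
    rcases Finset.mem_union.1 hx with hx' | hx'
    · have h1 := Finset.mem_sdiff.1 hx'
      rcases haddok j x h1.1 with h2 | h2
      · exact Finset.mem_union_left _ (Finset.mem_sdiff.2 ⟨h2, h1.2⟩)
      · exact absurd h2 h1.2
    · have h1 := Finset.mem_sdiff.1 hx'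
      by_cases hxC : x ∈ C j
      · exact absurd h1.1 (hremok j x hxC h1.2)
      · exact Finset.mem_union_right _ (Finset.mem_sdiff.2 ⟨h1.1, hxC⟩)
  apply Finset.sum_lt_sum (fun j _ => Finset.card_le_card (hsub j))
  refine ⟨α, Finset.mem_univ α, ?_⟩
  apply Finset.card_lt_card
  refine ⟨hsub α, fun hcon => ?_⟩
  have h1 : e ∈ (C α \ D α) ∪ (D α \ C α) :=
    Finset.mem_union_right _ (Finset.mem_sdiff.2 ⟨heD, heC⟩)
  have h2 := hcon h1
  rcases Finset.mem_union.1 h2 with h3 | h3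
  · exact (Finset.mem_sdiff.1 h3).2 heD
  · exact (Finset.mem_sdiff.1 h3).2 heC'

section Profile
variable (P : Fin n → Matroidal m) (i : Fin n) (X : Finset (Fin m))

lemma Ppp_other {j : Fin n} (hj : j ≠ i) :
    (Function.update P i ((P i).restrict X)) j = P j := Function.update_of_ne hj _ _

lemma Ppp_i : (Function.update P i ((P i).restrict X)) i = (P i).restrict X :=
  Function.update_self _ _ _

lemma restrict_v (Y : Finset (Fin m)) : ((P i).restrict X).v Y = (P i).v (X ∩ Y) := rfl

lemma indep_restrict_iff (Y : Finset (Fin m)) :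
    Indep ((P i).restrict X) Y ↔ Y ⊆ X ∧ Indep (P i) Y := by
  constructor
  · intro h
    have h1 : (P i).v (X ∩ Y) = Y.card := h
    have h2 : (P i).v (X ∩ Y) ≤ (X ∩ Y).card := v_le_card _ _
    have h3 : (X ∩ Y).card ≤ Y.card := Finset.card_le_card (Finset.inter_subset_right)
    have h4 : X ∩ Y = Y := Finset.eq_of_subset_of_card_le
      (Finset.inter_subset_right) (by omega)
    have h5 : Y ⊆ X := by
      rw [← h4]; exact Finset.inter_subset_left
    refine ⟨h5, ?_⟩
    unfold Indep
    rw [h4] at h1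
    exact h1
  · rintro ⟨h1, h2⟩
    unfold Indep at *
    have h3 : X ∩ Y = Y := Finset.inter_eq_right.2 h1
    show (P i).v (X ∩ Y) = Y.card
    rw [h3]; exact h2

end Profile
end SEaux

namespace SEaux
open Finset
variable {n m : ℕ}

lemma sum_card_add {C C' : Fin n → Finset (Fin m)} {α : Fin n}
    (hα : (C' α).card = (C α).card + 1)
    (hoth : ∀ j, j ≠ α → (C' j).card = (C j).card) :
    ∑ j, (C' j).card = ∑ j, (C j).card + 1 := by
  have h1 : ∀ (E : Fin n → Finset (Fin m)),
      ∑ j, (E j).card = ∑ j ∈ Finset.univ.erase α, (E j).card + (E α).card :=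
    fun E => (Finset.sum_erase_add _ _ (Finset.mem_univ α)).symm
  have h2 : ∑ j ∈ Finset.univ.erase α, ((C' j).card) = ∑ j ∈ Finset.univ.erase α, (C j).card :=
    Finset.sum_congr rfl (fun j hj => hoth j (Finset.mem_erase.1 hj).1)
  rw [h1 C', h1 C, h2, hα]
  omega

/-- apply EX against an LD allocation: the add branch is impossible, and we get the
Lorenz bound on the donor coordinate. -/
lemma EX_LD {Q : Fin n → Matroidal m} {C D : Fin n → Finset (Fin m)}
    (hC : C ∈ cLD Q) (hDa : IsAllocation D) (hDc : Clean Q D)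
    (α : Fin n) (hlt : (C α).card < (D α).card) :
    ∃ C' β, IsAllocation C' ∧ Clean Q C' ∧ β ≠ α ∧ (D β).card < (C β).card ∧
      (C' α).card = (C α).card + 1 ∧ (C β).card = (C' β).card + 1 ∧
      (∀ j, j ≠ α → j ≠ β → (C' j).card = (C j).card) ∧
      (∀ j, j ≠ β → D j ⊆ C j → C' j = C j) ∧
      (∀ j x, x ∈ C' j → x ∈ C j ∨ x ∈ D j) ∧
      (∀ j x, x ∈ C j → x ∉ C' j → x ∉ D j) ∧
      (∃ x, x ∈ D α ∧ x ∉ C α ∧ x ∈ C' α) ∧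
      (C β).card ≤ (C α).card + 1 := by
  obtain ⟨C', hC'a, hC'c, haddok, hremok, hstrict, hcardα, hbranch⟩ :=
    EX hC.2.1 hC.1 hDa hDc α hlt
  rcases hbranch with ⟨hcards, -⟩ | ⟨β, hβα, hβlt, hβcard, hcards, hnogain⟩
  · exfalso
    have hsum := sum_card_add hcardα hcards
    have := LD_welfare hC hC'a hC'c
    omega
  · have hL3 : (C β).card ≤ (C α).card + 1 :=
      LD_no_transfer hC hC'a hC'c (Ne.symm hβα) hcardα hβcard
        (fun j h1 h2 => hcards j h1 h2)
    exact ⟨C', β, hC'a, hC'c, hβα, hβlt, hcardα, hβcard, hcards, hnogain,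
      haddok, hremok, hstrict, hL3⟩

/-- if moreover the donor has exactly one more than the receiver, the exchange stays LD -/
lemma EX_LD_swap {Q : Fin n → Matroidal m} {C C' : Fin n → Finset (Fin m)}
    (hC : C ∈ cLD Q) (hC'a : IsAllocation C') (hC'c : Clean Q C') {α β : Fin n}
    (hβα : β ≠ α)
    (hcardα : (C' α).card = (C α).card + 1) (hβcard : (C β).card = (C' β).card + 1)
    (hcards : ∀ j, j ≠ α → j ≠ β → (C' j).card = (C j).card)
    (heq : (C β).card = (C α).card + 1) : C' ∈ cLD Q := by
  apply LD_swap hC hC'a hC'c (a := α) (b := β)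
  · omega
  · omega
  · intro j h1 h2; exact hcards j h1 h2

end SEaux

namespace SEaux
open Finset
variable {n m : ℕ}

abbrev Pu (P : Fin n → Matroidal m) (i : Fin n) (X : Finset (Fin m)) :
    Fin n → Matroidal m := Function.update P i ((P i).restrict X)

lemma clean_Pu_to_P {P : Fin n → Matroidal m} {i : Fin n} {X : Finset (Fin m)}
    {C : Fin n → Finset (Fin m)} (hC : Clean (Pu P i X) C) : Clean P C := by
  intro j
  by_cases hj : j = i
  · subst hj
    have h := hC j
    unfold Pu at h
    rw [Function.update_self] at h
    exact ((indep_restrict_iff P j X (C j)).1 h).2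
  · have h := hC j
    unfold Pu at h
    rwa [Function.update_of_ne hj] at h

lemma clean_Pu_sub {P : Fin n → Matroidal m} {i : Fin n} {X : Finset (Fin m)}
    {C : Fin n → Finset (Fin m)} (hC : Clean (Pu P i X) C) : C i ⊆ X := by
  have h := hC i
  unfold Pu at h
  rw [Function.update_self] at h
  exact ((indep_restrict_iff P i X (C i)).1 h).1

lemma clean_P_to_Pu {P : Fin n → Matroidal m} {i : Fin n} {X : Finset (Fin m)}
    {C : Fin n → Finset (Fin m)} (hC : Clean P C) (hsub : C i ⊆ X) :
    Clean (Pu P i X) C := by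
  intro j
  unfold Pu
  by_cases hj : j = i
  · subst hj
    show Indep (Function.update P j ((P j).restrict X) j) (C j)
    rw [Function.update_self]
    exact (indep_restrict_iff P j X (C j)).2 ⟨hsub, hC j⟩
  · show Indep (Function.update P i ((P i).restrict X) j) (C j)
    rw [Function.update_of_ne hj]
    exact hC j

/-- the allocation `B` obtained from `A°` by replacing agent i's bundle with X -/
lemma Bo_alloc {A0 : Fin n → Finset (Fin m)} {i : Fin n} {X : Finset (Fin m)}
    (hA : IsAllocation A0) (hsub : X ⊆ A0 i) :
    IsAllocation (Function.update A0 i X) := by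
  intro p q hpq
  by_cases hp : p = i
  · subst hp
    rw [Function.update_self, Function.update_of_ne (Ne.symm hpq)]
    exact Finset.disjoint_of_subset_left hsub (hA p q hpq)
  · rw [Function.update_of_ne hp]
    by_cases hq : q = i
    · subst hq
      rw [Function.update_self]
      exact Finset.disjoint_of_subset_right hsub (hA p q hpq)
    · rw [Function.update_of_ne hq]
      exact hA p q hpq

lemma Bo_clean {P : Fin n → Matroidal m} {i : Fin n} {X : Finset (Fin m)}
    {A0 : Fin n → Finset (Fin m)} (hc : Clean P A0) (hsub : X ⊆ A0 i) :
    Clean (Pu P i X) (Function.update A0 i X) := by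
  apply clean_P_to_Pu
  · intro j
    by_cases hj : j = i
    · subst hj
      rw [Function.update_self]
      exact indep_subset (P j) hsub (hc j)
    · rw [Function.update_of_ne hj]
      exact hc j
  · rw [Function.update_self]

lemma sdc_comm (A B : Finset (Fin m)) : sdc A B = sdc B A := by
  unfold sdc; rw [Finset.union_comm]

def Transp (u v : Fin n → ℕ) (i : Fin n) : Prop :=
  ∃ a b, a ≠ i ∧ b ≠ i ∧ u a = v b ∧ u b = v a ∧ ∀ j, j ≠ a → j ≠ b → u j = v j

lemma Transp.refl (u : Fin n → ℕ) {i c : Fin n} (hc : c ≠ i) : Transp u u i :=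
  ⟨c, c, hc, hc, rfl, rfl, fun _ _ _ => rfl⟩

/-- the measure used by all cascades -/
def muB (A0 Atil : Fin n → Finset (Fin m)) (i : Fin n) (X : Finset (Fin m)) : ℕ :=
  ∑ j, sdc (Atil j) ((Function.update A0 i X) j)

lemma muB_lt_of_Atil {A0 Atil Atil' : Fin n → Finset (Fin m)} {i : Fin n} {X : Finset (Fin m)}
    (haddok : ∀ j x, x ∈ Atil' j → x ∈ Atil j ∨ x ∈ (Function.update A0 i X) j)
    (hremok : ∀ j x, x ∈ Atil j → x ∉ Atil' j → x ∉ (Function.update A0 i X) j)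
    {α : Fin n}
    (hstrict : ∃ x, x ∈ (Function.update A0 i X) α ∧ x ∉ Atil α ∧ x ∈ Atil' α) :
    muB A0 Atil' i X < muB A0 Atil i X :=
  mu_lt haddok hremok hstrict

lemma muB_lt_of_A0 {A0 A0' Atil : Fin n → Finset (Fin m)} {i : Fin n} {X : Finset (Fin m)}
    (haddok : ∀ j x, x ∈ A0' j → x ∈ A0 j ∨ x ∈ Atil j)
    (hremok : ∀ j x, x ∈ A0 j → x ∉ A0' j → x ∉ Atil j)
    (hieq : A0' i = A0 i)
    {α : Fin n}
    (hstrict : ∃ x, x ∈ Atil α ∧ x ∉ A0 α ∧ x ∈ A0' α) :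
    muB A0' Atil i X < muB A0 Atil i X := by
  have h := mu_lt (C := A0) (C' := A0') (D := Atil) haddok hremok hstrict
  unfold muB
  have hsplit : ∀ (E F : Fin n → Finset (Fin m)),
      ∑ j, sdc (F j) ((Function.update E i X) j)
        = ∑ j ∈ Finset.univ.erase i, sdc (F j) (E j) + sdc (F i) X := by
    intro E F
    rw [← Finset.sum_erase_add _ _ (Finset.mem_univ i)]
    congr 1
    · apply Finset.sum_congr rfl
      intro j hj
      rw [Function.update_of_ne (Finset.mem_erase.1 hj).1]
    · rw [Function.update_self]
  rw [hsplit A0' Atil, hsplit A0 Atil]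
  have hsum : ∀ (E : Fin n → Finset (Fin m)),
      ∑ j, sdc (E j) (Atil j) = ∑ j ∈ Finset.univ.erase i, sdc (E j) (Atil j)
        + sdc (E i) (Atil i) :=
    fun E => (Finset.sum_erase_add _ _ (Finset.mem_univ i)).symm
  rw [hsum A0', hsum A0, hieq] at h
  have hc : ∀ (E : Fin n → Finset (Fin m)) (S : Finset (Fin n)),
      ∑ j ∈ S, sdc (E j) (Atil j) = ∑ j ∈ S, sdc (Atil j) (E j) :=
    fun E S => Finset.sum_congr rfl (fun j _ => sdc_comm _ _)
  rw [hc A0' _, hc A0 _] at h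
  omega

end SEaux

namespace SEaux
open Finset
variable {n m : ℕ}

/-- The mutual descent engine: starting from a mismatched coordinate `c`, we either
derive a contradiction or make one Lorenz-preserving update to one of the two
allocations, decreasing the measure `muB`. -/
lemma DESC {P : Fin n → Matroidal m} {i : Fin n} {X : Finset (Fin m)} {ui W : ℕ}
    (hWui : W ≤ ui)
    (hgam : ∀ E, IsAllocation E → Clean P E → E ∈ cLD P →
      (E i).card + 1 = ui → ui ≤ W → False)
    (V : ℕ) :
    ∀ (A0 Atil : Fin n → Finset (Fin m)) (c : Fin n),
      A0 ∈ cLD P → X ⊆ A0 i → (A0 i).card = ui →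
      Atil ∈ cLD (Pu P i X) →
      c ≠ i →
      ( ((A0 c).card < (Atil c).card ∧ (Atil c).card ≤ W ∧ (A0 c).card ≤ V)
        ∨ ((Atil c).card < (A0 c).card ∧ (Atil c).card ≤ W ∧ (Atil c).card ≤ V) ) →
      ∃ A0' Atil', A0' ∈ cLD P ∧ X ⊆ A0' i ∧ (A0' i).card = ui ∧
        Atil' ∈ cLD (Pu P i X) ∧
        Transp (fun j => (A0' j).card) (fun j => (A0 j).card) i ∧
        Transp (fun j => (Atil' j).card) (fun j => (Atil j).card) i ∧
        muB A0' Atil' i X < muB A0 Atil i X := by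
  induction V using Nat.strong_induction_on with
  | _ V ih =>
  intro A0 Atil c hA0 hX0 hui hAt hci hcase
  have hAtA : IsAllocation Atil := hAt.2.1
  have hAtCpp : Clean (Pu P i X) Atil := hAt.1
  have hAtCP : Clean P Atil := clean_Pu_to_P hAtCpp
  have hAtsub : Atil i ⊆ X := clean_Pu_sub hAtCpp
  have hA0A : IsAllocation A0 := hA0.2.1
  have hA0C : Clean P A0 := hA0.1
  rcases hcase with ⟨hlt, hWc, hV⟩ | ⟨hlt, hWc, hV⟩
  · -- P-side descent at c
    obtain ⟨C', γ, hC'a, hC'c, hγc, hγlt, hcardc, hγcard, hcards, hnogain,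
      haddok, hremok, hstrict, hL3⟩ := EX_LD hA0 hAtA hAtCP c hlt
    by_cases hγeq : γ = i
    · subst hγeq
      exfalso
      have h1 : ui ≤ W := by omega
      have heq : (A0 γ).card = (A0 c).card + 1 := by omega
      have hC'LD : C' ∈ cLD P := EX_LD_swap hA0 hC'a hC'c hγc hcardc hγcard hcards heq
      exact hgam C' hC'a hC'c hC'LD (by omega) h1
    · by_cases hgood : (A0 γ).card = (A0 c).card + 1
      · have hC'LD : C' ∈ cLD P := EX_LD_swap hA0 hC'a hC'c hγc hcardc hγcard hcards hgood
        have hisub : Atil i ⊆ A0 i := hAtsub.trans hX0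
        have hC'i : C' i = A0 i := hnogain i (fun h => hγeq h.symm) hisub
        refine ⟨C', Atil, hC'LD, by rw [hC'i]; exact hX0, by rw [hC'i]; exact hui, hAt,
          ?_, Transp.refl _ hci, ?_⟩
        · refine ⟨c, γ, hci, hγeq, ?_, ?_, fun j h1 h2 => hcards j h1 h2⟩
          · show (C' c).card = (A0 γ).card; omega
          · show (C' γ).card = (A0 c).card; omega
        · exact muB_lt_of_A0 haddok hremok hC'i hstrict
      · have h2 : (A0 γ).card ≤ (A0 c).card := by omega
        have h4 : (Atil γ).card < V := by omega
        exact ih ((Atil γ).card) h4 A0 Atil γ hA0 hX0 hui hAt hγeq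
          (Or.inr ⟨hγlt, by omega, le_rfl⟩)
  · -- P''-side descent at c
    have hB0a : IsAllocation (Function.update A0 i X) := Bo_alloc hA0A hX0
    have hB0c : Clean (Pu P i X) (Function.update A0 i X) := Bo_clean hA0C hX0
    have hB0oth : ∀ j, j ≠ i → (Function.update A0 i X) j = A0 j :=
      fun j hj => Function.update_of_ne hj _ _
    have hlt' : (Atil c).card < ((Function.update A0 i X) c).card := by
      rw [hB0oth c hci]; exact hlt
    obtain ⟨C', l, hC'a, hC'c, hlc, hllt, hcardc, hlcard, hcards, hnogain,
      haddok, hremok, hstrict, hL3⟩ := EX_LD hAt hB0a hB0c c hlt'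
    have hli : l ≠ i := by
      intro h
      subst h
      rw [Function.update_self] at hllt
      have : (Atil l).card ≤ X.card := Finset.card_le_card hAtsub
      omega
    have hllt' : (A0 l).card < (Atil l).card := by rw [← hB0oth l hli]; exact hllt
    by_cases hgood : (Atil l).card = (Atil c).card + 1
    · have hC'LD : C' ∈ cLD (Pu P i X) :=
        EX_LD_swap hAt hC'a hC'c hlc hcardc hlcard hcards hgood
      refine ⟨A0, C', hA0, hX0, hui, hC'LD, Transp.refl _ hci, ?_, ?_⟩
      · refine ⟨c, l, hci, hli, ?_, ?_, fun j h1 h2 => hcards j h1 h2⟩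
        · show (C' c).card = (Atil l).card; omega
        · show (C' l).card = (Atil c).card; omega
      · exact muB_lt_of_Atil haddok hremok hstrict
    · have h1 : (Atil l).card ≤ (Atil c).card := by omega
      have h4 : (A0 l).card < V := by omega
      exact ih ((A0 l).card) h4 A0 Atil l hA0 hX0 hui hAt hli
        (Or.inl ⟨hllt', by omega, le_rfl⟩)

end SEaux

namespace SEaux
open Finset
variable {n m : ℕ}

lemma Transp.at_i {u v : Fin n → ℕ} {i : Fin n} (h : Transp u v i) : u i = v i := by
  obtain ⟨a, b, ha, hb, -, -, hoth⟩ := h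
  exact hoth i (fun hc => ha hc.symm) (fun hc => hb hc.symm)

lemma Transp.exists_ge {u v : Fin n → ℕ} {i : Fin n} (h : Transp u v i) {t : ℕ}
    (hex : ∃ j, j ≠ i ∧ t ≤ v j) : ∃ j, j ≠ i ∧ t ≤ u j := by
  obtain ⟨a, b, ha, hb, hab, hba, hoth⟩ := h
  obtain ⟨j, hj, hjt⟩ := hex
  by_cases hjb : j = b
  · exact ⟨a, ha, by rw [hab, ← hjb]; exact hjt⟩
  · by_cases hja : j = a
    · exact ⟨b, hb, by rw [hba, ← hja]; exact hjt⟩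
    · exact ⟨j, hj, by rw [hoth j hja hjb]; exact hjt⟩

lemma Transp.all_le {u v : Fin n → ℕ} {i : Fin n} (h : Transp u v i) {t : ℕ}
    (hall : ∀ j, v j ≤ t) : ∀ j, u j ≤ t := by
  obtain ⟨a, b, ha, hb, hab, hba, hoth⟩ := h
  intro j
  by_cases hja : j = a
  · rw [hja, hab]; exact hall b
  · by_cases hjb : j = b
    · rw [hjb, hba]; exact hall a
    · rw [hoth j hja hjb]; exact hall j

lemma sum_card_two {u v : Fin n → ℕ} {α β : Fin n} (hαβ : α ≠ β)
    (hα : u α = v α + 1) (hβ : v β = u β + 1)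
    (hoth : ∀ j, j ≠ α → j ≠ β → u j = v j) :
    ∑ j, u j = ∑ j, v j := by
  have h1 : ∀ (w : Fin n → ℕ), ∑ j, w j
      = ∑ j ∈ (Finset.univ.erase α).erase β, w j + w β + w α := by
    intro w
    rw [Finset.sum_erase_add _ _ (Finset.mem_erase.2 ⟨Ne.symm hαβ, Finset.mem_univ β⟩),
      Finset.sum_erase_add _ _ (Finset.mem_univ α)]
  have h2 : ∑ j ∈ (Finset.univ.erase α).erase β, u j
      = ∑ j ∈ (Finset.univ.erase α).erase β, v j := by
    apply Finset.sum_congr rfl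
    intro j hj
    have hjβ := (Finset.mem_erase.1 hj).1
    have hjα := (Finset.mem_erase.1 (Finset.mem_erase.1 hj).2).1
    exact hoth j hjα hjβ
  rw [h1 u, h1 v, h2]
  omega

/-- the P''-internal descent engine (both allocations Lorenz dominating for P''). -/
lemma DESC2 {P : Fin n → Matroidal m} {i : Fin n} {X : Finset (Fin m)} (V : ℕ) :
    ∀ (As Ab : Fin n → Finset (Fin m)) (c : Fin n),
      As ∈ cLD (Pu P i X) → As i = X →
      Ab ∈ cLD (Pu P i X) → (Ab i).card < X.card →
      c ≠ i →
      ( ((As c).card < (Ab c).card ∧ (As c).card + 2 ≤ X.card ∧ (As c).card ≤ V)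
        ∨ ((Ab c).card < (As c).card ∧ (Ab c).card + 1 ≤ X.card ∧ (Ab c).card ≤ V) ) →
      ∃ As' Ab', As' ∈ cLD (Pu P i X) ∧ As' i = X ∧
        Ab' ∈ cLD (Pu P i X) ∧ (Ab' i).card = (Ab i).card ∧
        (∑ j, sdc (As' j) (Ab' j)) < (∑ j, sdc (As j) (Ab j)) := by
  induction V using Nat.strong_induction_on with
  | _ V ih =>
  intro As Ab c hAs hAsi hAb hAbi hci hcase
  have hAsA : IsAllocation As := hAs.2.1
  have hAsC : Clean (Pu P i X) As := hAs.1
  have hAbA : IsAllocation Ab := hAb.2.1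
  have hAbC : Clean (Pu P i X) Ab := hAb.1
  have hsum_comm : ∀ (E F : Fin n → Finset (Fin m)),
      ∑ j, sdc (E j) (F j) = ∑ j, sdc (F j) (E j) :=
    fun E F => Finset.sum_congr rfl (fun j _ => sdc_comm _ _)
  rcases hcase with ⟨hlt, hWc, hV⟩ | ⟨hlt, hWc, hV⟩
  · -- As-side descent at c
    obtain ⟨C', l, hC'a, hC'c, hlc, hllt, hcardc, hlcard, hcards, hnogain,
      haddok, hremok, hstrict, hL3⟩ := EX_LD hAs hAbA hAbC c hlt
    have hli : l ≠ i := by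
      intro h
      subst h
      have : (As l).card = X.card := by rw [hAsi]
      omega
    by_cases hgood : (As l).card = (As c).card + 1
    · have hC'LD : C' ∈ cLD (Pu P i X) :=
        EX_LD_swap hAs hC'a hC'c hlc hcardc hlcard hcards hgood
      have hC'i : (C' i).card = (As i).card := hcards i (Ne.symm hci) (Ne.symm hli)
      have hC'isub : C' i ⊆ X := clean_Pu_sub hC'LD.1
      have hC'iX : C' i = X := by
        apply Finset.eq_of_subset_of_card_le hC'isub
        rw [hC'i, hAsi]
      refine ⟨C', Ab, hC'LD, hC'iX, hAb, rfl, ?_⟩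
      have := mu_lt haddok hremok hstrict
      omega
    · -- descend Ab-side at l
      have h1 : (As l).card ≤ (As c).card := by omega
      have h2 : (Ab l).card < (As l).card := hllt
      exact ih ((Ab l).card) (by omega) As Ab l hAs hAsi hAb hAbi hli
        (Or.inr ⟨h2, by omega, le_rfl⟩)
  · -- Ab-side descent at c
    obtain ⟨C', l, hC'a, hC'c, hlc, hllt, hcardc, hlcard, hcards, hnogain,
      haddok, hremok, hstrict, hL3⟩ := EX_LD hAb hAsA hAsC c hlt
    have hli : l ≠ i := by
      intro h
      subst h
      rw [hAsi] at hllt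
      omega
    by_cases hgood : (Ab l).card = (Ab c).card + 1
    · have hC'LD : C' ∈ cLD (Pu P i X) :=
        EX_LD_swap hAb hC'a hC'c hlc hcardc hlcard hcards hgood
      have hC'i : (C' i).card = (Ab i).card := hcards i (Ne.symm hci) (Ne.symm hli)
      refine ⟨As, C', hAs, hAsi, hC'LD, hC'i, ?_⟩
      have := mu_lt haddok hremok hstrict
      rw [hsum_comm As C', hsum_comm As Ab]
      omega
    · have h1 : (Ab l).card ≤ (Ab c).card := by omega
      exact ih ((As l).card) (by omega) As Ab l hAs hAsi hAb hAbi hli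
        (Or.inl ⟨hllt, by omega, le_rfl⟩)

end SEaux

namespace SEaux
open Finset
variable {n m : ℕ}

/-- Cascade (S): there is a clean Lorenz dominating allocation for the restricted
profile that gives agent i exactly the bundle X. -/
lemma S_exists {P : Fin n → Matroidal m} {i : Fin n} {X : Finset (Fin m)}
    {A : Fin n → Finset (Fin m)} (hA : A ∈ cLD P) (hX : X ⊆ A i)
    {At0 : Fin n → Finset (Fin m)} (hAt0 : At0 ∈ cLD (Pu P i X)) :
    ∃ As, As ∈ cLD (Pu P i X) ∧ As i = X := by
  have hgui : X.card ≤ (A i).card := Finset.card_le_card hX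
  suffices h : ∀ M (A0 Atil : Fin n → Finset (Fin m)),
      A0 ∈ cLD P → X ⊆ A0 i → (A0 i).card = (A i).card →
      Atil ∈ cLD (Pu P i X) → muB A0 Atil i X ≤ M →
      ∃ As, As ∈ cLD (Pu P i X) ∧ As i = X by
    exact h (muB A At0 i X) A At0 hA hX rfl hAt0 le_rfl
  intro M
  induction M using Nat.strong_induction_on with
  | _ M ih =>
  intro A0 Atil hA0 hX0 hui hAt hM
  have hAtA : IsAllocation Atil := hAt.2.1
  have hAtCpp : Clean (Pu P i X) Atil := hAt.1
  have hsub : Atil i ⊆ X := clean_Pu_sub hAtCpp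
  have hsle : (Atil i).card ≤ X.card := Finset.card_le_card hsub
  by_cases hs : (Atil i).card = X.card
  · exact ⟨Atil, hAt, Finset.eq_of_subset_of_card_le hsub (by omega)⟩
  · have hslt : (Atil i).card < X.card := by omega
    have hA0A : IsAllocation A0 := hA0.2.1
    have hA0C : Clean P A0 := hA0.1
    have hB0a : IsAllocation (Function.update A0 i X) := Bo_alloc hA0A hX0
    have hB0c : Clean (Pu P i X) (Function.update A0 i X) := Bo_clean hA0C hX0
    have hlt : (Atil i).card < ((Function.update A0 i X) i).card := by
      rw [Function.update_self]; exact hslt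
    obtain ⟨C', β, hC'a, hC'c, hβi, hβlt, hcardi, hβcard, hcards, hnogain,
      haddok, hremok, hstrict, hL3⟩ := EX_LD hAt hB0a hB0c i hlt
    have hβlt' : (A0 β).card < (Atil β).card := by
      rwa [Function.update_of_ne hβi] at hβlt
    by_cases hgood : (Atil β).card = (Atil i).card + 1
    · have hC'LD : C' ∈ cLD (Pu P i X) :=
        EX_LD_swap hAt hC'a hC'c hβi hcardi hβcard hcards hgood
      have hmu : muB A0 C' i X < muB A0 Atil i X := muB_lt_of_Atil haddok hremok hstrict
      exact ih (muB A0 C' i X) (by omega) A0 C' hA0 hX0 hui hC'LD le_rfl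
    · have hβb : (Atil β).card ≤ (Atil i).card := by omega
      have hWui : X.card - 1 ≤ (A i).card := by omega
      have hgam : ∀ E, IsAllocation E → Clean P E → E ∈ cLD P →
          (E i).card + 1 = (A i).card → (A i).card ≤ X.card - 1 → False := by
        intro E _ _ _ _ h2
        omega
      obtain ⟨A0', Atil', hA0', hX0', hui', hAt', hT0, hTt, hmu⟩ :=
        DESC hWui hgam ((A0 β).card) A0 Atil β hA0 hX0 hui hAt hβi
          (Or.inl ⟨hβlt', by omega, le_rfl⟩)
      exact ih (muB A0' Atil' i X) (by omega) A0' Atil' hA0' hX0' hui' hAt' le_rfl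

end SEaux

namespace SEaux
open Finset
variable {n m : ℕ}

/-- C1: every clean Lorenz dominating allocation for the restricted profile gives
agent i at least |X| - 1. -/
lemma C1_lemma {P : Fin n → Matroidal m} {i : Fin n} {X : Finset (Fin m)}
    {As : Fin n → Finset (Fin m)} (hAs0 : As ∈ cLD (Pu P i X)) (hAsi0 : As i = X)
    {Ab : Fin n → Finset (Fin m)} (hAb0 : Ab ∈ cLD (Pu P i X)) :
    X.card ≤ (Ab i).card + 1 := by
  by_contra hcon
  push_neg at hcon
  have hwit : (Ab i).card + 2 ≤ X.card := hcon
  clear hcon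
  suffices h : ∀ M (As' Ab' : Fin n → Finset (Fin m)),
      As' ∈ cLD (Pu P i X) → As' i = X →
      Ab' ∈ cLD (Pu P i X) → (Ab' i).card + 2 ≤ X.card →
      (∑ j, sdc (As' j) (Ab' j)) ≤ M → False by
    exact h (∑ j, sdc (As j) (Ab j)) As Ab hAs0 hAsi0 hAb0 hwit le_rfl
  intro M
  induction M using Nat.strong_induction_on with
  | _ M ih =>
  intro As' Ab' hAs hAsi hAb hwit hM
  have hAsA : IsAllocation As' := hAs.2.1
  have hAsC : Clean (Pu P i X) As' := hAs.1
  have hlt : (Ab' i).card < (As' i).card := by rw [hAsi]; omega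
  obtain ⟨C', β, hC'a, hC'c, hβi, hβlt, hcardi, hβcard, hcards, hnogain,
    haddok, hremok, hstrict, hL3⟩ := EX_LD hAb hAsA hAsC i hlt
  -- (As' β).card < (Ab' β).card and (Ab' β).card ≤ (Ab' i).card + 1
  have hentry : (As' β).card + 2 ≤ X.card := by omega
  obtain ⟨As2, Ab2, hAs2, hAsi2, hAb2, hAb2i, hmu⟩ :=
    DESC2 ((As' β).card) As' Ab' β hAs hAsi hAb (by omega) hβi
      (Or.inl ⟨hβlt, hentry, le_rfl⟩)
  exact ih (∑ j, sdc (As2 j) (Ab2 j)) (by omega) As2 Ab2 hAs2 hAsi2 hAb2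
    (by omega) le_rfl

end SEaux

namespace SEaux
open Finset
variable {n m : ℕ}

/-- T3': if agent i is of minimum size among cLD(P) and some agent is strictly larger,
then in any cLD(P'') allocation in which i receives all of X, someone exceeds |X|. -/
lemma T3_lemma {P : Fin n → Matroidal m} {i : Fin n} {X : Finset (Fin m)}
    {A : Fin n → Finset (Fin m)} (hA : A ∈ cLD P) (hX : X ⊆ A i)
    (h1 : ∀ E, E ∈ cLD P → (A i).card ≤ (E i).card)
    (hrich : ∃ j, j ≠ i ∧ (A i).card < (A j).card)
    {Ab : Fin n → Finset (Fin m)} (hAb0 : Ab ∈ cLD (Pu P i X)) (hAbi0 : Ab i = X)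
    (hmax0 : ∀ j, (Ab j).card ≤ X.card) : False := by
  have hgui : X.card ≤ (A i).card := Finset.card_le_card hX
  suffices h : ∀ M (A0 Atil : Fin n → Finset (Fin m)),
      A0 ∈ cLD P → X ⊆ A0 i → (A0 i).card = (A i).card →
      (∃ j, j ≠ i ∧ (A i).card < (A0 j).card) →
      Atil ∈ cLD (Pu P i X) → Atil i = X → (∀ j, (Atil j).card ≤ X.card) →
      muB A0 Atil i X ≤ M → False by
    exact h (muB A Ab i X) A Ab hA hX rfl hrich hAb0 hAbi0 hmax0 le_rfl
  intro M
  induction M using Nat.strong_induction_on with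
  | _ M ih =>
  intro A0 Atil hA0 hX0 hui hrich0 hAt hAti hmax hM
  obtain ⟨js, hjsi, hjslt⟩ := hrich0
  have hentry2 : (Atil js).card < (A0 js).card := by
    have := hmax js
    omega
  have hWui : X.card ≤ (A i).card := hgui
  have hgam : ∀ E, IsAllocation E → Clean P E → E ∈ cLD P →
      (E i).card + 1 = (A i).card → (A i).card ≤ X.card → False := by
    intro E _ _ hELD hcard _
    have := h1 E hELD
    omega
  obtain ⟨A0', Atil', hA0', hX0', hui', hAt', hT0, hTt, hmu⟩ :=
    DESC hWui hgam ((Atil js).card) A0 Atil js hA0 hX0 hui hAt hjsi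
      (Or.inr ⟨hentry2, hmax js, le_rfl⟩)
  -- transport invariants
  have hrich' : ∃ j, j ≠ i ∧ (A i).card < (A0' j).card := by
    obtain ⟨j, hj1, hj2⟩ := hT0.exists_ge (t := (A i).card + 1) ⟨js, hjsi, hjslt⟩
    exact ⟨j, hj1, hj2⟩
  have hmax' : ∀ j, (Atil' j).card ≤ X.card := hTt.all_le hmax
  have hAti' : Atil' i = X := by
    have hcardi : (Atil' i).card = (Atil i).card := hTt.at_i
    apply Finset.eq_of_subset_of_card_le (clean_Pu_sub hAt'.1)
    rw [hcardi, hAti]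
  exact ih (muB A0' Atil' i X) (by omega) A0' Atil' hA0' hX0' hui' hrich' hAt' hAti'
    hmax' le_rfl

end SEaux

namespace SEaux
open Finset
variable {n m : ℕ}

/-- the star lemma: if agent i has minimum size among cLD(P), then no cLD(P'')
allocation gives i fewer than |X| items. -/
lemma star_lemma {P : Fin n → Matroidal m} {i : Fin n} {X : Finset (Fin m)}
    {A : Fin n → Finset (Fin m)} (hA : A ∈ cLD P) (hX : X ⊆ A i)
    (h1 : ∀ E, E ∈ cLD P → (A i).card ≤ (E i).card)
    {Ab : Fin n → Finset (Fin m)} (hAb0 : Ab ∈ cLD (Pu P i X))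
    (hab0 : (Ab i).card + 1 = X.card) : False := by
  have hgui : X.card ≤ (A i).card := Finset.card_le_card hX
  have hXind : Indep (P i) X := indep_subset (P i) hX (hA.1 i)
  have hgam : ∀ E, IsAllocation E → Clean P E → E ∈ cLD P →
      (E i).card + 1 = (A i).card → (A i).card ≤ X.card → False := by
    intro E _ _ hELD hcard _
    have := h1 E hELD
    omega
  suffices h : ∀ M (A0 Atil : Fin n → Finset (Fin m)),
      A0 ∈ cLD P → X ⊆ A0 i → (A0 i).card = (A i).card →
      Atil ∈ cLD (Pu P i X) → (Atil i).card + 1 = X.card →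
      muB A0 Atil i X ≤ M → False by
    exact h (muB A Ab i X) A Ab hA hX rfl hAb0 hab0 le_rfl
  intro M
  induction M using Nat.strong_induction_on with
  | _ M ih =>
  intro A0 Atil hA0 hX0 hui hAt hab hM
  have hAtA : IsAllocation Atil := hAt.2.1
  have hAtCpp : Clean (Pu P i X) Atil := hAt.1
  have hsub : Atil i ⊆ X := clean_Pu_sub hAtCpp
  have hA0A : IsAllocation A0 := hA0.2.1
  have hA0C : Clean P A0 := hA0.1
  -- the unique missing element of X
  have hcard1 : (X \ Atil i).card = 1 := by
    rw [Finset.card_sdiff_of_subset hsub]; omega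
  obtain ⟨xb, hxbeq⟩ := Finset.card_eq_one.1 hcard1
  have hxbmem : xb ∈ X \ Atil i := by rw [hxbeq]; exact Finset.mem_singleton_self xb
  have hxbX : xb ∈ X := (Finset.mem_sdiff.1 hxbmem).1
  have hxbA : xb ∉ Atil i := (Finset.mem_sdiff.1 hxbmem).2
  have hinssub : insert xb (Atil i) ⊆ X := Finset.insert_subset_iff.2 ⟨hxbX, hsub⟩
  have hind : Indep ((Pu P i X) i) (insert xb (Atil i)) := by
    show Indep (Function.update P i ((P i).restrict X) i) _
    rw [Function.update_self]
    exact (indep_restrict_iff P i X _).2 ⟨hinssub, indep_subset (P i) hinssub hXind⟩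
  by_cases hfree : ∀ j, xb ∉ Atil j
  · -- xb unallocated : welfare contradiction
    have hCpa : IsAllocation (addE Atil i xb) := isalloc_addE hAtA hfree
    have hCpc : Clean (Pu P i X) (addE Atil i xb) := clean_addE hAtCpp hind
    have hsum : ∑ j, ((addE Atil i xb) j).card = ∑ j, (Atil j).card + 1 :=
      sum_card_add (card_addE hxbA) (fun j hj => by rw [addE_other Atil xb hj])
    have := LD_welfare hAt hCpa hCpc
    omega
  · push_neg at hfree
    obtain ⟨β, hxbβ⟩ := hfree
    have hβi : β ≠ i := fun h => hxbA (h ▸ hxbβ)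
    have hiβ : i ≠ β := Ne.symm hβi
    have hbpos : 0 < (Atil β).card := Finset.card_pos.2 ⟨xb, hxbβ⟩
    -- the transfer allocation
    have hChata : IsAllocation (moveE Atil i β xb) := isalloc_moveE hAtA hxbβ hβi
    have hChatc : Clean (Pu P i X) (moveE Atil i β xb) := clean_moveE hAtCpp hβi hind
    have hChati : ((moveE Atil i β xb) i).card = (Atil i).card + 1 := by
      rw [moveE_fst, Finset.card_insert_of_notMem hxbA]
    have hChatβ : (Atil β).card = ((moveE Atil i β xb) β).card + 1 := by
      rw [moveE_snd Atil xb hβi, Finset.card_erase_of_mem hxbβ]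
      omega
    have hChatoth : ∀ j, j ≠ i → j ≠ β → (moveE Atil i β xb) j = Atil j :=
      fun j hj1 hj2 => moveE_other Atil xb hj1 hj2
    have hbg : (Atil β).card ≤ X.card := by
      have := LD_no_transfer hAt hChata hChatc hiβ hChati hChatβ
        (fun j hj1 hj2 => by rw [hChatoth j hj1 hj2])
      omega
    rcases lt_trichotomy ((A0 β).card) ((Atil β).card) with hc | hc | hc
    · -- P-side descent at β
      obtain ⟨A0', Atil', hA0', hX0', hui', hAt', hT0, hTt, hmu⟩ :=
        DESC hgui hgam ((A0 β).card) A0 Atil β hA0 hX0 hui hAt hβi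
          (Or.inl ⟨hc, hbg, le_rfl⟩)
      have hab' : (Atil' i).card + 1 = X.card := by
        have := hTt.at_i
        omega
      exact ih (muB A0' Atil' i X) (by omega) A0' Atil' hA0' hX0' hui' hAt' hab' le_rfl
    · -- balanced : the Chat entry
      have hB0a : IsAllocation (Function.update A0 i X) := Bo_alloc hA0A hX0
      have hB0c : Clean (Pu P i X) (Function.update A0 i X) := Bo_clean hA0C hX0
      have hltc : ((moveE Atil i β xb) β).card < ((Function.update A0 i X) β).card := by
        rw [Function.update_of_ne hβi]
        omega
      obtain ⟨C6, hC6a, hC6c, haddok6, hremok6, hstrict6, hcardβ6, hbranch6⟩ :=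
        EX hChata hChatc hB0a hB0c β hltc
      rcases hbranch6 with ⟨hcards6, -⟩ | ⟨l6, hl6β, hl6lt, hl6card, hcards6, -⟩
      · -- add branch : welfare contradiction
        have hsum1 : ∑ j, (C6 j).card = ∑ j, ((moveE Atil i β xb) j).card + 1 :=
          sum_card_add hcardβ6 hcards6
        have hsum2 : ∑ j, ((moveE Atil i β xb) j).card = ∑ j, (Atil j).card :=
          sum_card_two hiβ hChati hChatβ (fun j hj1 hj2 => by rw [hChatoth j hj1 hj2])
        have := LD_welfare hAt hC6a hC6c
        omega
      · -- swap branch at l6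
        have hl6i : l6 ≠ i := by
          intro h
          subst h
          rw [Function.update_self] at hl6lt
          omega
        have hChatl6 : (moveE Atil i β xb) l6 = Atil l6 := hChatoth l6 hl6i hl6β
        have hl6lt' : (A0 l6).card < (Atil l6).card := by
          rw [Function.update_of_ne hl6i] at hl6lt
          rw [← hChatl6]
          exact hl6lt
        have hC6i : (C6 i).card = (Atil i).card + 1 := by
          rw [hcards6 i hiβ (Ne.symm hl6i)]
          exact hChati
        have hC6l6 : (Atil l6).card = (C6 l6).card + 1 := by
          rw [← hChatl6]
          exact hl6card
        have hC6oth : ∀ j, j ≠ i → j ≠ l6 → (C6 j).card = (Atil j).card := by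
          intro j hj1 hj2
          by_cases hjβ : j = β
          · subst hjβ
            rw [hcardβ6]
            omega
          · rw [hcards6 j hjβ hj2, hChatoth j hj1 hjβ]
        have hl6g : (Atil l6).card ≤ X.card := by
          have := LD_no_transfer hAt hC6a hC6c (Ne.symm hl6i) hC6i hC6l6 hC6oth
          omega
        obtain ⟨A0', Atil', hA0', hX0', hui', hAt', hT0, hTt, hmu⟩ :=
          DESC hgui hgam ((A0 l6).card) A0 Atil l6 hA0 hX0 hui hAt hl6i
            (Or.inl ⟨hl6lt', hl6g, le_rfl⟩)
        have hab' : (Atil' i).card + 1 = X.card := by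
          have := hTt.at_i
          omega
        exact ih (muB A0' Atil' i X) (by omega) A0' Atil' hA0' hX0' hui' hAt' hab' le_rfl
    · -- P''-side descent at β
      obtain ⟨A0', Atil', hA0', hX0', hui', hAt', hT0, hTt, hmu⟩ :=
        DESC hgui hgam ((Atil β).card) A0 Atil β hA0 hX0 hui hAt hβi
          (Or.inr ⟨hc, hbg, le_rfl⟩)
      have hab' : (Atil' i).card + 1 = X.card := by
        have := hTt.at_i
        omega
      exact ih (muB A0' Atil' i X) (by omega) A0' Atil' hA0' hX0' hui' hAt' hab' le_rfl

end SEaux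

namespace SEaux
open Finset
variable {n m : ℕ}

lemma sup_card_eq {Q : Fin n → Matroidal m} {D E : Fin n → Finset (Fin m)}
    (hD : D ∈ cLD Q) (hE : E ∈ cLD Q) (hn : 0 < n) :
    Finset.univ.sup (fun j => (D j).card) = Finset.univ.sup (fun j => (E j).card) := by
  have h1 : ∑ j, (E j).card ≤ ∑ j, (D j).card := by
    have := LD_dom hD hE.2.1 hE.1 (le_refl n)
    rw [kS_top, kS_top] at this
    simpa using this
  have h2 : ∑ j, (D j).card ≤ ∑ j, (E j).card := by
    have := LD_dom hE hD.2.1 hD.1 (le_refl n)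
    rw [kS_top, kS_top] at this
    simpa using this
  have h3 := LD_dom hD hE.2.1 hE.1 (Nat.sub_le n 1)
  have h4 := LD_dom hE hD.2.1 hD.1 (Nat.sub_le n 1)
  have h5 : kSmallestSum (fun j => (D j).card) (n-1)
      + Finset.univ.sup (fun j => (D j).card) = ∑ j, (D j).card := by
    have := kS_pred (fun j => (D j).card) hn
    simpa using this
  have h6 : kSmallestSum (fun j => (E j).card) (n-1)
      + Finset.univ.sup (fun j => (E j).card) = ∑ j, (E j).card := by
    have := kS_pred (fun j => (E j).card) hn
    simpa using this
  omega

end SEaux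

open SEaux in
theorem se_restricted_faithful' {n m : ℕ} (P : Fin n → Matroidal m) (i : Fin n)
    (A : Fin n → Finset (Fin m)) (hA : A ∈ cLD P)
    (X : Finset (Fin m)) (hX : X ⊆ A i)
    (A'' : Fin n → Finset (Fin m))
    (hA'' : A'' ∈ cLD (Function.update P i ((P i).restrict X))) :
    (P i).v X + sePay P A i ≤
      (P i).v (A'' i) + sePay (Function.update P i ((P i).restrict X)) A'' i := by
  classical
  have hn : 0 < n := i.pos
  have hA''u : A'' ∈ cLD (Pu P i X) := hA''
  have hXind : Indep (P i) X := indep_subset (P i) hX (hA.1 i)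
  have hvX : (P i).v X = X.card := hXind
  have hsub'' : A'' i ⊆ X := clean_Pu_sub hA''u.1
  have hvA'' : (P i).v (A'' i) = (A'' i).card := (clean_Pu_to_P hA''u.1) i
  have ha_le : (A'' i).card ≤ X.card := Finset.card_le_card hsub''
  obtain ⟨As, hAs, hAsi⟩ := S_exists hA hX hA''u
  have hC1 : X.card ≤ (A'' i).card + 1 := C1_lemma hAs hAsi hA''u
  -- the minSize of the restricted profile
  have hminmem : ∃ B, B ∈ cLD (Pu P i X) ∧
      minSize (Pu P i X) i = (B i).card := by
    have hne : {c | ∃ B ∈ cLD (Pu P i X), c = (B i).card}.Nonempty :=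
      ⟨(A'' i).card, A'', hA''u, rfl⟩
    obtain ⟨B, hB, hBc⟩ := Nat.sInf_mem hne
    exact ⟨B, hB, hBc⟩
  have hminle : minSize (Pu P i X) i ≤ (A'' i).card :=
    Nat.sInf_le ⟨A'', hA''u, rfl⟩
  rw [hvX, hvA'']
  by_cases hag : (A'' i).card = X.card
  · -- case a = g
    by_cases hp : (A i).card = minSize P i ∧
        (A i).card < Finset.univ.sup (fun j => (A j).card)
    · -- p = 1 : we must show p'' = 1
      have h1 : ∀ E, E ∈ cLD P → (A i).card ≤ (E i).card := by
        intro E hE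
        rw [hp.1]
        exact Nat.sInf_le ⟨E, hE, rfl⟩
      have hrich : ∃ j, j ≠ i ∧ (A i).card < (A j).card := by
        obtain ⟨j, -, hj⟩ := Finset.exists_mem_eq_sup Finset.univ
          (Finset.univ_nonempty_iff.2 (Fin.pos_iff_nonempty.1 hn))
          (fun j => (A j).card)
        refine ⟨j, ?_, ?_⟩
        · intro hc
          subst hc
          have := hp.2
          omega
        · have := hp.2
          omega
      have hA''iX : A'' i = X :=
        Finset.eq_of_subset_of_card_le hsub'' (by omega)
      have hbig : ∃ j, X.card < (A'' j).card := by
        by_contra hcon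
        push_neg at hcon
        exact T3_lemma hA hX h1 hrich hA''u hA''iX hcon
      have hsup : (A'' i).card < Finset.univ.sup (fun j => (A'' j).card) := by
        obtain ⟨j, hj⟩ := hbig
        have h7 : (A'' j).card ≤ Finset.univ.sup (fun j => (A'' j).card) := by
          simpa using Finset.le_sup (f := fun j => (A'' j).card) (Finset.mem_univ j)
        omega
      have hmin'' : (A'' i).card = minSize (Pu P i X) i := by
        obtain ⟨B, hB, hBc⟩ := hminmem
        have hBC1 : X.card ≤ (B i).card + 1 := C1_lemma hAs hAsi hB
        have hBstar : ¬ ((B i).card + 1 = X.card) := by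
          intro hc
          exact star_lemma hA hX h1 hB hc
        omega
      have hp'' : sePay (Function.update P i ((P i).restrict X)) A'' i = 1 := by
        unfold sePay
        rw [if_pos ⟨hmin'', hsup⟩]
      have hpv : sePay P A i = 1 := by
        unfold sePay
        rw [if_pos hp]
      rw [hp'', hpv]
      omega
    · have hpv : sePay P A i = 0 := by
        unfold sePay
        rw [if_neg hp]
      rw [hpv]
      have : sePay (Function.update P i ((P i).restrict X)) A'' i ≥ 0 := Nat.zero_le _
      omega
  · -- case a = g - 1
    have hag1 : (A'' i).card + 1 = X.card := by omega
    have hpv : sePay P A i = 0 := by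
      unfold sePay
      rw [if_neg]
      intro hp
      have h1 : ∀ E, E ∈ cLD P → (A i).card ≤ (E i).card := by
        intro E hE
        rw [hp.1]
        exact Nat.sInf_le ⟨E, hE, rfl⟩
      exact star_lemma hA hX h1 hA''u hag1
    have hmin'' : (A'' i).card = minSize (Pu P i X) i := by
      obtain ⟨B, hB, hBc⟩ := hminmem
      have hBC1 : X.card ≤ (B i).card + 1 := C1_lemma hAs hAsi hB
      omega
    have hsup : (A'' i).card < Finset.univ.sup (fun j => (A'' j).card) := by
      have hsupeq := sup_card_eq hA''u hAs hn
      have hAsle : (As i).card ≤ Finset.univ.sup (fun j => (As j).card) := by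
        simpa using Finset.le_sup (f := fun j => (As j).card) (Finset.mem_univ i)
      rw [hAsi] at hAsle
      omega
    have hp'' : sePay (Function.update P i ((P i).restrict X)) A'' i = 1 := by
      unfold sePay
      rw [if_pos ⟨hmin'', hsup⟩]
    rw [hpv, hp'']
    omega

/-- Lemma 3.16: the SE mechanism is restricted-faithful. -/
theorem se_restricted_faithful {n m : ℕ} (P : Fin n → Matroidal m) (i : Fin n)
    (A : Fin n → Finset (Fin m)) (hA : A ∈ cLD P)
    (X : Finset (Fin m)) (hX : X ⊆ A i)
    (A'' : Fin n → Finset (Fin m))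
    (hA'' : A'' ∈ cLD (Function.update P i ((P i).restrict X))) :
    (P i).v X + sePay P A i ≤
      (P i).v (A'' i) + sePay (Function.update P i ((P i).restrict X)) A'' i :=
  se_restricted_faithful' P i A hA X hX A'' hA''
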